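/- For k ≥ 2, let G_k be the graph with vertex set X_k ∪ Y_k ∪ Z_{k+1} ∪ {w}, where X_k = {x_1,…,x_k} and Y_k = {y_1,…,y_k} are independent sets, Z_{k+1} = {z_1,…,z_{k+1}} induces a complete graph K_{k+1}, the vertex w is adjacent to every vertex of X_k ∪ Y_k, the vertex z_2 is adjacent to y_2,…,y_k, and z_1 is adjacent to y_1 (and these are all edges). Then gp(G_k) = 2k and gp(G_k − z_2) = 3k − 2. -/

import Mathlib

open SimpleGraph

/-- `S` is a *general position set* of `G`: no three distinct vertices of `S`
lie on a common shortest path (geodesic) of `G`. -/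
def IsGPSet {V : Type*} (G : SimpleGraph V) (S : Set V) : Prop :=
  ∀ ⦃u v w : V⦄, u ∈ S → v ∈ S → w ∈ S → u ≠ v → u ≠ w → v ≠ w →
    ∀ p : G.Walk u v, p.IsPath → p.length = G.dist u v → w ∉ p.support

/-- The *general position number* of `G`: the maximum cardinality of a
general position set. -/
noncomputable def gpNum {V : Type*} [Fintype V] (G : SimpleGraph V) : ℕ :=
  sSup {n : ℕ | ∃ S : Finset V, IsGPSet G ↑S ∧ S.card = n}

/-- The vertex-deleted subgraph `G - x`, induced on `V(G) \ {x}`. -/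
def delVert {V : Type*} (G : SimpleGraph V) (x : V) : SimpleGraph {y : V // y ≠ x} :=
  G.comap Subtype.val

/-- The graph `G_k`: vertices are `x_i = Sum.inl (Sum.inl i)` and
`y_i = Sum.inl (Sum.inr i)` for `i : Fin k` (with `x_j, y_j` corresponding to
`i = j - 1`), `z_j = Sum.inr (Sum.inl (j-1))` for `j ∈ [k+1]`, and
`w = Sum.inr (Sum.inr ())`.  The vertex `w` is adjacent to every vertex of
`X_k ∪ Y_k`, the set `Z_{k+1}` induces `K_{k+1}`, `z_2` is adjacent to
`y_2, …, y_k`, and `z_1` is adjacent to `y_1`; `X_k` and `Y_k` are independent. -/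
def Gkgraph (k : ℕ) : SimpleGraph ((Fin k ⊕ Fin k) ⊕ (Fin (k + 1) ⊕ Unit)) :=
  SimpleGraph.fromRel (fun a b =>
    match a, b with
    | Sum.inr (Sum.inr _), Sum.inl _ => True
    | Sum.inr (Sum.inl _), Sum.inr (Sum.inl _) => True
    | Sum.inr (Sum.inl zi), Sum.inl (Sum.inr yj) =>
        ((zi : ℕ) = 1 ∧ 1 ≤ (yj : ℕ)) ∨ ((zi : ℕ) = 0 ∧ (yj : ℕ) = 0)
    | _, _ => False)

open Sum Finset in
section

section General
variable {V : Type*} {G : SimpleGraph V}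

lemma isGPSet_of_dist_lt [DecidableEq V] {S : Set V}
    (h : ∀ u v m, u ∈ S → v ∈ S → m ∈ S → u ≠ v → u ≠ m → v ≠ m →
      G.dist u v < G.dist u m + G.dist m v) : IsGPSet G S := by
  intro u v m hu hv hm huv hum hvm p _ hlen hmem
  have h1 : G.dist u m ≤ (p.takeUntil m hmem).length := dist_le _
  have h2 : G.dist m v ≤ (p.dropUntil m hmem).length := dist_le _
  have h3 : (p.takeUntil m hmem).length + (p.dropUntil m hmem).length = p.length := by
    rw [← Walk.length_append, p.take_spec hmem]
  have := h u v m hu hv hm huv hum hvm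
  omega

lemma IsGPSet.not_between {S : Set V} (hS : IsGPSet G S) {u v m : V}
    (hu : u ∈ S) (hv : v ∈ S) (hm : m ∈ S) (huv : u ≠ v) (hum : u ≠ m) (hvm : v ≠ m)
    (h1 : G.dist u m ≠ 0) (h2 : G.dist m v ≠ 0)
    (heq : G.dist u m + G.dist m v = G.dist u v) : False := by
  obtain ⟨p1, hp1⟩ := (Reachable.of_dist_ne_zero h1).exists_walk_length_eq_dist
  obtain ⟨p2, hp2⟩ := (Reachable.of_dist_ne_zero h2).exists_walk_length_eq_dist
  have hlen : (p1.append p2).length = G.dist u v := by rw [Walk.length_append]; omega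
  exact hS hu hv hm huv hum hvm _ ((p1.append p2).isPath_of_length_eq_dist hlen) hlen
    (by rw [Walk.mem_support_append_iff]; left; exact p1.end_mem_support)

lemma length_ge_potential (f : V → ℕ) (hf : ∀ a b, G.Adj a b → f b ≤ f a + 1) :
    ∀ {u v : V} (p : G.Walk u v), f v ≤ f u + p.length := by
  intro u v p
  induction p with
  | nil => simp
  | @cons a b c h q ih =>
      have := hf _ _ h
      rw [Walk.length_cons]
      omega

lemma dist_ge_potential (f : V → ℕ) (hf : ∀ a b, G.Adj a b → f b ≤ f a + 1)
    {u v : V} (hr : G.Reachable u v) : f v ≤ f u + G.dist u v := by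
  obtain ⟨p, hp⟩ := hr.exists_walk_length_eq_dist
  have := length_ge_potential f hf p
  omega

lemma dist_pendant {u w0 v : V} (hu : ∀ a, G.Adj u a → a = w0) (huv : u ≠ v)
    (hr : G.Reachable u v) : G.dist w0 v + 1 ≤ G.dist u v := by
  obtain ⟨p, hp⟩ := hr.exists_walk_length_eq_dist
  cases p with
  | nil => exact absurd rfl huv
  | @cons a b c h q =>
      have hb := hu _ h
      subst hb
      have := dist_le q
      rw [Walk.length_cons] at hp
      omega

lemma two_le_dist {u v : V} (hne : u ≠ v) (hadj : ¬ G.Adj u v) (hr : G.Reachable u v) :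
    2 ≤ G.dist u v := by
  obtain ⟨p, hp⟩ := hr.exists_walk_length_eq_dist
  cases p with
  | nil => exact absurd rfl hne
  | @cons a b c h q =>
      cases q with
      | nil => exact absurd h hadj
      | cons h' q' => simp [Walk.length_cons] at hp; omega

lemma gpNum_eq' {V : Type*} [Fintype V] (G : SimpleGraph V) (m : ℕ)
    (hub : ∀ S : Finset V, IsGPSet G ↑S → S.card ≤ m)
    (hex : ∃ S : Finset V, IsGPSet G ↑S ∧ S.card = m) :
    sSup {n : ℕ | ∃ S : Finset V, IsGPSet G ↑S ∧ S.card = n} = m := by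
  apply le_antisymm
  · have h0 : (0:ℕ) ∈ {n : ℕ | ∃ S : Finset V, IsGPSet G ↑S ∧ S.card = n} :=
      ⟨∅, fun u v w hu => absurd hu (by simp), by simp⟩
    apply csSup_le ⟨0, h0⟩
    rintro n ⟨S, hS, rfl⟩
    exact hub S hS
  · apply le_csSup ⟨Fintype.card V, ?_⟩ hex
    rintro n ⟨S, _, rfl⟩
    exact S.card_le_univ
end General

open Sum

section Helpers
variable {V : Type*} {G : SimpleGraph V}

lemma dist_le_two {u a v : V} (h1 : G.Adj u a) (h2 : G.Adj a v) : G.dist u v ≤ 2 := by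
  simpa using dist_le (Walk.cons h1 (Walk.cons h2 Walk.nil))

lemma reach_two {u a v : V} (h1 : G.Adj u a) (h2 : G.Adj a v) : G.Reachable u v :=
  (Walk.cons h1 (Walk.cons h2 Walk.nil)).reachable

lemma dist_le_three {u a b v : V} (h1 : G.Adj u a) (h2 : G.Adj a b) (h3 : G.Adj b v) :
    G.dist u v ≤ 3 := by
  simpa using dist_le (Walk.cons h1 (Walk.cons h2 (Walk.cons h3 Walk.nil)))

lemma reach_three {u a b v : V} (h1 : G.Adj u a) (h2 : G.Adj a b) (h3 : G.Adj b v) :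
    G.Reachable u v :=
  (Walk.cons h1 (Walk.cons h2 (Walk.cons h3 Walk.nil))).reachable

lemma dist_cons_le {u a v : V} (h : G.Adj u a) (hr : G.Reachable a v) :
    G.dist u v ≤ G.dist a v + 1 := by
  obtain ⟨p, hp⟩ := hr.exists_walk_length_eq_dist
  have := dist_le (Walk.cons h p)
  rw [Walk.length_cons] at this
  omega
end Helpers


variable {k : ℕ}

abbrev Vk (k : ℕ) := (Fin k ⊕ Fin k) ⊕ (Fin (k + 1) ⊕ Unit)
def xv (i : Fin k) : Vk k := inl (inl i)
def yv (i : Fin k) : Vk k := inl (inr i)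
def zv (j : Fin (k+1)) : Vk k := inr (inl j)
def wv : Vk k := inr (inr ())

lemma adj_w_inl (a : Fin k ⊕ Fin k) : (Gkgraph k).Adj wv (inl a) := by
  simp [Gkgraph, wv]

lemma adj_z_z {j j' : Fin (k+1)} (h : j ≠ j') : (Gkgraph k).Adj (zv j) (zv j') := by
  simp [Gkgraph, zv, h]

lemma adj_z_y {j : Fin (k+1)} {i : Fin k}
    (h : ((j:ℕ) = 1 ∧ 1 ≤ (i:ℕ)) ∨ ((j:ℕ) = 0 ∧ (i:ℕ) = 0)) :
    (Gkgraph k).Adj (zv j) (yv i) := by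
  simp [Gkgraph, zv, yv]
  simpa using h

lemma not_adj_inl_inl (a b : Fin k ⊕ Fin k) : ¬ (Gkgraph k).Adj (inl a) (inl b) := by
  simp [Gkgraph]

lemma not_adj_x_z (i : Fin k) (j : Fin (k+1)) : ¬ (Gkgraph k).Adj (xv i) (zv j) := by
  simp [Gkgraph, xv, zv]

lemma not_adj_w_z (j : Fin (k+1)) : ¬ (Gkgraph k).Adj wv (zv j) := by
  simp [Gkgraph, wv, zv]

lemma not_adj_y_z {i : Fin k} {j : Fin (k+1)}
    (h : ¬ (((j:ℕ) = 1 ∧ 1 ≤ (i:ℕ)) ∨ ((j:ℕ) = 0 ∧ (i:ℕ) = 0))) :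
    ¬ (Gkgraph k).Adj (yv i) (zv j) := by
  simp [Gkgraph, yv, zv]
  simpa using h

lemma adj_y_z_elim {i : Fin k} {j : Fin (k+1)}
    (h : (Gkgraph k).Adj (yv i) (zv j)) :
    ((j:ℕ) = 1 ∧ 1 ≤ (i:ℕ)) ∨ ((j:ℕ) = 0 ∧ (i:ℕ) = 0) := by
  by_contra hc
  exact not_adj_y_z hc h

/-- potential function from `w` -/
def fpot : Vk k → ℕ
  | inl _ => 1
  | inr (inl j) => if (j:ℕ) ≤ 1 then 2 else 3
  | inr (inr _) => 0

lemma fpot_lip : ∀ a b : Vk k, (Gkgraph k).Adj a b → fpot b ≤ fpot a + 1 := by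
  rintro a (b | (j | u)) hab
  · rcases a with a | (j' | u) <;> simp [fpot] <;> split_ifs <;> omega
  · rcases a with (i | i) | (j' | u)
    · exact absurd hab (not_adj_x_z i j)
    · have := adj_y_z_elim (i := i) (j := j) hab
      simp only [fpot]
      split_ifs <;> omega
    · simp only [fpot]; split_ifs <;> omega
    · cases u; exact absurd hab (not_adj_w_z j)
  · rcases a with a | (j' | u') <;> simp [fpot]

lemma x_pendant (i : Fin k) : ∀ a, (Gkgraph k).Adj (xv i) a → a = wv := by
  rintro ((b | b) | (j | u)) h
  · exact absurd h (not_adj_inl_inl _ _)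
  · exact absurd h (not_adj_inl_inl _ _)
  · exact absurd h (not_adj_x_z i j)
  · cases u; rfl

section dists
variable (hk : 2 ≤ k)
include hk

lemma dist_w_z (j : Fin (k+1)) :
    (Gkgraph k).dist wv (zv j) = if (j:ℕ) ≤ 1 then 2 else 3 := by
  have hz0 : ((⟨0, by omega⟩ : Fin (k+1)) : ℕ) = 0 := rfl
  have hub : (Gkgraph k).dist wv (zv j) ≤ if (j:ℕ) ≤ 1 then 2 else 3 := by
    split_ifs with hj
    · rcases Nat.lt_or_ge (j:ℕ) 1 with hj0 | hj1
      · exact dist_le_two (adj_w_inl (inr ⟨0, by omega⟩))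
          (adj_z_y (j := j) (Or.inr ⟨by omega, rfl⟩)).symm
      · exact dist_le_two (adj_w_inl (inr ⟨1, by omega⟩))
          (adj_z_y (j := j) (Or.inl ⟨by omega, by simp⟩)).symm
    · exact dist_le_three (adj_w_inl (inr ⟨0, by omega⟩))
        (adj_z_y (j := ⟨0, by omega⟩) (Or.inr ⟨rfl, rfl⟩)).symm
        (adj_z_z (by intro hh; rw [Fin.ext_iff] at hh; simp at hh; omega))
  have hr : (Gkgraph k).Reachable wv (zv j) := by
    split_ifs at hub with hj
    · rcases Nat.lt_or_ge (j:ℕ) 1 with hj0 | hj1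
      · exact reach_two (adj_w_inl (inr ⟨0, by omega⟩))
          (adj_z_y (j := j) (Or.inr ⟨by omega, rfl⟩)).symm
      · exact reach_two (adj_w_inl (inr ⟨1, by omega⟩))
          (adj_z_y (j := j) (Or.inl ⟨by omega, by simp⟩)).symm
    · exact reach_three (adj_w_inl (inr ⟨0, by omega⟩))
        (adj_z_y (j := ⟨0, by omega⟩) (Or.inr ⟨rfl, rfl⟩)).symm
        (adj_z_z (by intro hh; rw [Fin.ext_iff] at hh; simp at hh; omega))
  have hlb := dist_ge_potential fpot fpot_lip hr
  simp only [fpot, wv, zv] at hlb ⊢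
  rw [show ((Gkgraph k).dist (inr (inr ())) (inr (inl j))) = (Gkgraph k).dist wv (zv j) from rfl] at hlb ⊢
  split_ifs at hub hlb ⊢ <;> omega

end dists
section dists2
variable (hk : 2 ≤ k)

lemma dist_inl_inl {a b : Fin k ⊕ Fin k} (h : a ≠ b) :
    (Gkgraph k).dist (inl a) (inl b) = 2 := by
  have hub := dist_le_two (G := Gkgraph k) (adj_w_inl a).symm (adj_w_inl b)
  have hr := reach_two (G := Gkgraph k) (adj_w_inl a).symm (adj_w_inl b)
  have hlb := two_le_dist (by simp [h]) (not_adj_inl_inl a b) hr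
  omega

lemma dist_w_inl (a : Fin k ⊕ Fin k) : (Gkgraph k).dist wv (inl a) = 1 :=
  dist_eq_one_iff_adj.mpr (adj_w_inl a)

lemma dist_z_z {j j' : Fin (k+1)} (h : j ≠ j') : (Gkgraph k).dist (zv j) (zv j') = 1 :=
  dist_eq_one_iff_adj.mpr (adj_z_z h)

lemma dist_y_z_adj {i : Fin k} {j : Fin (k+1)}
    (h : ((j:ℕ) = 1 ∧ 1 ≤ (i:ℕ)) ∨ ((j:ℕ) = 0 ∧ (i:ℕ) = 0)) :
    (Gkgraph k).dist (yv i) (zv j) = 1 :=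
  dist_eq_one_iff_adj.mpr (adj_z_y h).symm

include hk in
lemma dist_y_z {i : Fin k} {j : Fin (k+1)}
    (h : ¬ (((j:ℕ) = 1 ∧ 1 ≤ (i:ℕ)) ∨ ((j:ℕ) = 0 ∧ (i:ℕ) = 0))) :
    (Gkgraph k).dist (yv i) (zv j) = 2 := by
  rcases Nat.lt_or_ge (i:ℕ) 1 with hi | hi
  · -- i = 0, j ≠ 0 : via z0
    have hj0 : (j:ℕ) ≠ 0 := by omega
    have h1 : (Gkgraph k).Adj (yv i) (zv ⟨0, by omega⟩) :=
      (adj_z_y (Or.inr ⟨rfl, by omega⟩)).symm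
    have h2 : (Gkgraph k).Adj (zv ⟨0, by omega⟩) (zv j) :=
      adj_z_z (by rw [Fin.ne_iff_vne]; simpa using fun hh => hj0 hh.symm)
    have hub := dist_le_two h1 h2
    have hlb := two_le_dist (by simp [yv, zv]) (not_adj_y_z h) (reach_two h1 h2)
    omega
  · -- i ≥ 1, j ≠ 1 : via z1
    have hj1 : (j:ℕ) ≠ 1 := by omega
    have h1 : (Gkgraph k).Adj (yv i) (zv ⟨1, by omega⟩) :=
      (adj_z_y (Or.inl ⟨rfl, hi⟩)).symm
    have h2 : (Gkgraph k).Adj (zv ⟨1, by omega⟩) (zv j) :=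
      adj_z_z (by rw [Fin.ne_iff_vne]; simpa using fun hh => hj1 hh.symm)
    have hub := dist_le_two h1 h2
    have hlb := two_le_dist (by simp [yv, zv]) (not_adj_y_z h) (reach_two h1 h2)
    omega

include hk in
lemma reach_w_z (j : Fin (k+1)) : (Gkgraph k).Reachable wv (zv j) := by
  apply Reachable.of_dist_ne_zero
  rw [dist_w_z hk]
  split_ifs <;> omega

include hk in
lemma dist_x_z (i : Fin k) (j : Fin (k+1)) :
    (Gkgraph k).dist (xv i) (zv j) = if (j:ℕ) ≤ 1 then 3 else 4 := by
  have hub := dist_cons_le (G := Gkgraph k) (u := xv i)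
    ((adj_w_inl (inl i)).symm) (reach_w_z hk j)
  have hr : (Gkgraph k).Reachable (xv i) (zv j) :=
    ((Walk.cons ((adj_w_inl (inl i)).symm : (Gkgraph k).Adj (xv i) wv) Walk.nil).reachable).trans
      (reach_w_z hk j)
  have hlb := dist_pendant (x_pendant i) (by simp [xv, zv]) hr
  rw [dist_w_z hk] at hub hlb
  split_ifs at hub hlb ⊢ <;> omega
end dists2
section viol
variable {S : Finset (Vk k)} (hk : 2 ≤ k) (hS : IsGPSet (Gkgraph k) ↑S)
include hk hS

lemma F1 (hw : wv ∈ S) {a b : Fin k ⊕ Fin k} (hab : a ≠ b)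
    (ha : inl a ∈ S) (hb : inl b ∈ S) : False := by
  have e1 : (Gkgraph k).dist (inl a) wv = 1 := by
    rw [SimpleGraph.dist_comm]; exact dist_w_inl a
  refine hS.not_between (u := inl a) (m := wv) (v := inl b)
    (Finset.mem_coe.mpr ha) (Finset.mem_coe.mpr hb) (Finset.mem_coe.mpr hw)
    (by simp [hab]) (by simp [wv]) (by simp [wv]) ?_ ?_ ?_
  · rw [e1]; omega
  · rw [dist_w_inl]; omega
  · rw [e1, dist_w_inl, dist_inl_inl hab]

lemma F2 (hw : wv ∈ S) {j' j : Fin (k+1)} (hj' : (j':ℕ) ≤ 1) (hj : 2 ≤ (j:ℕ))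
    (ha : zv j' ∈ S) (hb : zv j ∈ S) : False := by
  have hne : j' ≠ j := by rw [Fin.ne_iff_vne]; omega
  refine hS.not_between (u := wv) (m := zv j') (v := zv j)
    (Finset.mem_coe.mpr hw) (Finset.mem_coe.mpr hb) (Finset.mem_coe.mpr ha)
    (by simp [wv, zv]) (by simp [wv, zv]) (by simp [zv, hne.symm]) ?_ ?_ ?_
  · rw [dist_w_z hk]; split_ifs <;> omega
  · rw [dist_z_z hne]; omega
  · rw [dist_w_z hk, dist_z_z hne, dist_w_z hk]
    split_ifs <;> omega

lemma F3 {i : Fin k} {j' j : Fin (k+1)}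
    (hadj : ((j':ℕ) = 1 ∧ 1 ≤ (i:ℕ)) ∨ ((j':ℕ) = 0 ∧ (i:ℕ) = 0))
    (hnadj : ¬ (((j:ℕ) = 1 ∧ 1 ≤ (i:ℕ)) ∨ ((j:ℕ) = 0 ∧ (i:ℕ) = 0)))
    (hy : yv i ∈ S) (ha : zv j' ∈ S) (hb : zv j ∈ S) : False := by
  have hne : j' ≠ j := by rw [Fin.ne_iff_vne]; omega
  refine hS.not_between (u := yv i) (m := zv j') (v := zv j)
    (Finset.mem_coe.mpr hy) (Finset.mem_coe.mpr hb) (Finset.mem_coe.mpr ha)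
    (by simp [yv, zv]) (by simp [yv, zv]) (by simp [zv, hne.symm]) ?_ ?_ ?_
  · rw [dist_y_z_adj hadj]; omega
  · rw [dist_z_z hne]; omega
  · rw [dist_y_z_adj hadj, dist_z_z hne, dist_y_z hk hnadj]

lemma F4 {i0 i : Fin k} {j' : Fin (k+1)}
    (hadj : ((j':ℕ) = 1 ∧ 1 ≤ (i:ℕ)) ∨ ((j':ℕ) = 0 ∧ (i:ℕ) = 0))
    (hx : xv i0 ∈ S) (hy : yv i ∈ S) (hz : zv j' ∈ S) : False := by
  have e1 : (Gkgraph k).dist (xv i0) (yv i) = 2 := dist_inl_inl (by simp)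
  refine hS.not_between (u := xv i0) (m := yv i) (v := zv j')
    (Finset.mem_coe.mpr hx) (Finset.mem_coe.mpr hz) (Finset.mem_coe.mpr hy)
    (by simp [xv, zv]) (by simp [xv, yv]) (by simp [yv, zv]) ?_ ?_ ?_
  · rw [e1]; omega
  · rw [dist_y_z_adj hadj]; omega
  · rw [e1, dist_y_z_adj hadj, dist_x_z hk]
    split_ifs <;> omega

lemma F5 {i0 : Fin k} {j' j : Fin (k+1)} (hj' : (j':ℕ) ≤ 1) (hj : 2 ≤ (j:ℕ))
    (hx : xv i0 ∈ S) (ha : zv j' ∈ S) (hb : zv j ∈ S) : False := by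
  have hne : j' ≠ j := by rw [Fin.ne_iff_vne]; omega
  refine hS.not_between (u := xv i0) (m := zv j') (v := zv j)
    (Finset.mem_coe.mpr hx) (Finset.mem_coe.mpr hb) (Finset.mem_coe.mpr ha)
    (by simp [xv, zv]) (by simp [xv, zv]) (by simp [zv, hne.symm]) ?_ ?_ ?_
  · rw [dist_x_z hk]; split_ifs <;> omega
  · rw [dist_z_z hne]; omega
  · rw [dist_x_z hk, dist_z_z hne, dist_x_z hk]
    split_ifs <;> omega

lemma F6 {i0 i : Fin k} {j : Fin (k+1)} (hj : 2 ≤ (j:ℕ))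
    (hx : xv i0 ∈ S) (hy : yv i ∈ S) (hz : zv j ∈ S) : False := by
  have e1 : (Gkgraph k).dist (xv i0) (yv i) = 2 := dist_inl_inl (by simp)
  have hnadj : ¬ (((j:ℕ) = 1 ∧ 1 ≤ (i:ℕ)) ∨ ((j:ℕ) = 0 ∧ (i:ℕ) = 0)) := by omega
  refine hS.not_between (u := xv i0) (m := yv i) (v := zv j)
    (Finset.mem_coe.mpr hx) (Finset.mem_coe.mpr hz) (Finset.mem_coe.mpr hy)
    (by simp [xv, zv]) (by simp [xv, yv]) (by simp [yv, zv]) ?_ ?_ ?_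
  · rw [e1]; omega
  · rw [dist_y_z hk hnadj]; omega
  · rw [e1, dist_y_z hk hnadj, dist_x_z hk]
    split_ifs <;> omega

end viol
open Finset

lemma card_union3_le {α : Type*} [DecidableEq α] (A B C : Finset α) :
    (A ∪ B ∪ C).card ≤ A.card + B.card + C.card :=
  le_trans (card_union_le _ _) (by have := card_union_le A B; omega)

def Xall (k : ℕ) : Finset (Vk k) := Finset.univ.image xv
def Yall (k : ℕ) : Finset (Vk k) := Finset.univ.image yv
def Zall (k : ℕ) : Finset (Vk k) := Finset.univ.image zv
def Yplus (k : ℕ) : Finset (Vk k) :=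
  Finset.univ.image (fun i : Fin (k-1) => yv ⟨(i:ℕ)+1, by have := i.isLt; omega⟩)
def Zplus (k : ℕ) : Finset (Vk k) :=
  Finset.univ.image (fun j : Fin (k-1) => zv ⟨(j:ℕ)+2, by have := j.isLt; omega⟩)

lemma Xall_card : (Xall k).card ≤ k := le_trans card_image_le (by simp)
lemma Yall_card : (Yall k).card ≤ k := le_trans card_image_le (by simp)
lemma Zall_card : (Zall k).card ≤ k + 1 := le_trans card_image_le (by simp)
lemma Yplus_card : (Yplus k).card ≤ k - 1 := le_trans card_image_le (by simp)
lemma Zplus_card : (Zplus k).card ≤ k - 1 := le_trans card_image_le (by simp)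

lemma mem_Xall (i : Fin k) : xv i ∈ Xall k := mem_image.mpr ⟨i, by simp⟩
lemma mem_Yall (i : Fin k) : yv i ∈ Yall k := mem_image.mpr ⟨i, by simp⟩
lemma mem_Zall (j : Fin (k+1)) : zv j ∈ Zall k := mem_image.mpr ⟨j, by simp⟩
lemma mem_Yplus {i : Fin k} (hi : 1 ≤ (i:ℕ)) : yv i ∈ Yplus k := by
  refine mem_image.mpr ⟨⟨(i:ℕ)-1, by have := i.isLt; omega⟩, by simp, ?_⟩
  apply congrArg
  rw [Fin.ext_iff]
  simp
  omega
lemma mem_Zplus {j : Fin (k+1)} (hj : 2 ≤ (j:ℕ)) : zv j ∈ Zplus k := by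
  refine mem_image.mpr ⟨⟨(j:ℕ)-2, by have := j.isLt; omega⟩, by simp, ?_⟩
  apply congrArg
  rw [Fin.ext_iff]
  simp
  omega

lemma gk_card_le (hk : 2 ≤ k) (S : Finset (Vk k)) (hS : IsGPSet (Gkgraph k) ↑S) :
    S.card ≤ 2 * k := by
  classical
  by_cases hw : wv ∈ S
  · -- w ∈ S : at most one `inl` vertex
    set T : Finset (Vk k) := S.filter (fun a => a.isLeft) with hT
    have hT1 : T.card ≤ 1 := by
      apply card_le_one.mpr
      intro a ha b hb
      rcases mem_filter.mp ha with ⟨haS, ha'⟩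
      rcases mem_filter.mp hb with ⟨hbS, hb'⟩
      rcases Sum.isLeft_iff.mp ha' with ⟨a', rfl⟩
      rcases Sum.isLeft_iff.mp hb' with ⟨b', rfl⟩
      by_contra hne
      exact F1 hk hS hw (by simpa using hne) haS hbS
    by_cases hzp : ∃ j : Fin (k+1), 2 ≤ (j:ℕ) ∧ zv j ∈ S
    · obtain ⟨j2, hj2, hj2S⟩ := hzp
      have hz01 : ∀ j : Fin (k+1), (j:ℕ) ≤ 1 → zv j ∉ S := fun j hj hjS =>
        F2 hk hS hw hj hj2 hjS hj2S
      have hsub : S ⊆ T ∪ {wv} ∪ Zplus k := by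
        intro a ha
        rcases a with (b | b) | (j | u)
        · exact mem_union_left _ (mem_union_left _ (mem_filter.mpr ⟨ha, rfl⟩))
        · exact mem_union_left _ (mem_union_left _ (mem_filter.mpr ⟨ha, rfl⟩))
        · refine mem_union_right _ ?_
          have : ¬ ((j:ℕ) ≤ 1) := fun hj => hz01 j hj ha
          exact mem_Zplus (by omega)
        · cases u; exact mem_union_left _ (mem_union_right _ (by simp [wv]))
      have h1 := card_union3_le T {wv} (Zplus k)
      have h2 := card_le_card hsub
      have h3 : ({wv} : Finset (Vk k)).card = 1 := card_singleton _
      have h4 := Zplus_card (k := k)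
      omega
    · push_neg at hzp
      have hsub : S ⊆ T ∪ {wv} ∪ {zv ⟨0, by omega⟩, zv ⟨1, by omega⟩} := by
        intro a ha
        rcases a with (b | b) | (j | u)
        · exact mem_union_left _ (mem_union_left _ (mem_filter.mpr ⟨ha, rfl⟩))
        · exact mem_union_left _ (mem_union_left _ (mem_filter.mpr ⟨ha, rfl⟩))
        · refine mem_union_right _ ?_
          have hj1 : (j:ℕ) ≤ 1 := by
            by_contra hje
            exact hzp j (by omega) ha
          have : j = ⟨0, by omega⟩ ∨ j = ⟨1, by omega⟩ := by
            rcases (by omega : (j:ℕ) = 0 ∨ (j:ℕ) = 1) with h | h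
            exacts [Or.inl (Fin.ext h), Or.inr (Fin.ext h)]
          rcases this with h | h <;> rw [h] <;> simp [zv]
        · cases u; exact mem_union_left _ (mem_union_right _ (by simp [wv]))
      have h1 := card_union3_le T {wv} ({zv ⟨0, by omega⟩, zv ⟨1, by omega⟩} : Finset (Vk k))
      have h2 := card_le_card hsub
      have h3 : ({wv} : Finset (Vk k)).card = 1 := card_singleton _
      have h4 : ({zv ⟨0, by omega⟩, zv ⟨1, by omega⟩} : Finset (Vk k)).card ≤ 2 :=
        card_insert_le _ _ |>.trans (by simp)
      omega
  · -- w ∉ S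
    by_cases hx : ∃ i : Fin k, xv i ∈ S
    · obtain ⟨i0, hi0⟩ := hx
      by_cases hzp : ∃ j : Fin (k+1), 2 ≤ (j:ℕ) ∧ zv j ∈ S
      · obtain ⟨j2, hj2, hj2S⟩ := hzp
        have hy : ∀ i : Fin k, yv i ∉ S := fun i hi => F6 hk hS hj2 hi0 hi hj2S
        have hz01 : ∀ j : Fin (k+1), (j:ℕ) ≤ 1 → zv j ∉ S := fun j hj hjS =>
          F5 hk hS hj hj2 hi0 hjS hj2S
        have hsub : S ⊆ Xall k ∪ Zplus k := by
          intro a ha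
          rcases a with (b | b) | (j | u)
          · exact mem_union_left _ (mem_Xall b)
          · exact absurd ha (hy b)
          · refine mem_union_right _ ?_
            have : ¬ ((j:ℕ) ≤ 1) := fun hj => hz01 j hj ha
            exact mem_Zplus (by omega)
          · cases u; exact absurd ha hw
        have h1 := card_union_le (Xall k) (Zplus k)
        have h2 := card_le_card hsub
        have h3 := Xall_card (k := k); have h4 := Zplus_card (k := k)
        omega
      · push_neg at hzp
        by_cases hz0 : zv ⟨0, by omega⟩ ∈ S
        · have hy0 : yv ⟨0, by omega⟩ ∉ S := fun hy =>
            F4 hk hS (Or.inr ⟨rfl, rfl⟩) hi0 hy hz0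
          by_cases hz1 : zv ⟨1, by omega⟩ ∈ S
          · have hyp : ∀ i : Fin k, 1 ≤ (i:ℕ) → yv i ∉ S := fun i hi hy =>
              F4 hk hS (Or.inl ⟨rfl, hi⟩) hi0 hy hz1
            have hsub : S ⊆ Xall k ∪ {zv ⟨0, by omega⟩, zv ⟨1, by omega⟩} := by
              intro a ha
              rcases a with (b | b) | (j | u)
              · exact mem_union_left _ (mem_Xall b)
              · rcases Nat.eq_zero_or_pos (b:ℕ) with hb | hb
                · exact absurd ha (by
                    have : b = ⟨0, by omega⟩ := Fin.ext (show (b:ℕ) = 0 by omega)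
                    rw [this]; exact hy0)
                · exact absurd ha (hyp b hb)
              · refine mem_union_right _ ?_
                have hj1 : (j:ℕ) ≤ 1 := by by_contra hje; exact hzp j (by omega) ha
                have : j = ⟨0, by omega⟩ ∨ j = ⟨1, by omega⟩ := by
                  rcases (by omega : (j:ℕ) = 0 ∨ (j:ℕ) = 1) with h | h
                  exacts [Or.inl (Fin.ext h), Or.inr (Fin.ext h)]
                rcases this with h | h <;> rw [h] <;> simp [zv]
              · cases u; exact absurd ha hw
            have h1 := card_union_le (Xall k) ({zv ⟨0, by omega⟩, zv ⟨1, by omega⟩} : Finset (Vk k))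
            have h2 := card_le_card hsub
            have h3 := Xall_card (k := k)
            have h4 : ({zv ⟨0, by omega⟩, zv ⟨1, by omega⟩} : Finset (Vk k)).card ≤ 2 :=
              card_insert_le _ _ |>.trans (by simp)
            omega
          · have hsub : S ⊆ Xall k ∪ Yplus k ∪ {zv ⟨0, by omega⟩} := by
              intro a ha
              rcases a with (b | b) | (j | u)
              · exact mem_union_left _ (mem_union_left _ (mem_Xall b))
              · rcases Nat.eq_zero_or_pos (b:ℕ) with hb | hb
                · exact absurd ha (by
                    have : b = ⟨0, by omega⟩ := Fin.ext (show (b:ℕ) = 0 by omega)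
                    rw [this]; exact hy0)
                · exact mem_union_left _ (mem_union_right _ (mem_Yplus hb))
              · refine mem_union_right _ ?_
                have hj1 : (j:ℕ) ≤ 1 := by by_contra hje; exact hzp j (by omega) ha
                have hj0 : (j:ℕ) ≠ 1 := by
                  intro hje
                  have : j = ⟨1, by omega⟩ := Fin.ext (show (j:ℕ) = 1 by omega)
                  exact hz1 (this ▸ ha)
                have : j = ⟨0, by omega⟩ := Fin.ext (show (j:ℕ) = 0 by omega)
                rw [this] at ha ⊢; simp [zv, yv]
              · cases u; exact absurd ha hw
            have h1 := card_union3_le (Xall k) (Yplus k) ({zv ⟨0, by omega⟩} : Finset (Vk k))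
            have h2 := card_le_card hsub
            have h3 := Xall_card (k := k); have h4 := Yplus_card (k := k)
            have h5 : ({zv ⟨0, by omega⟩} : Finset (Vk k)).card = 1 := card_singleton _
            omega
        · by_cases hz1 : zv ⟨1, by omega⟩ ∈ S
          · have hyp : ∀ i : Fin k, 1 ≤ (i:ℕ) → yv i ∉ S := fun i hi hy =>
              F4 hk hS (Or.inl ⟨rfl, hi⟩) hi0 hy hz1
            have hsub : S ⊆ Xall k ∪ {yv ⟨0, by omega⟩} ∪ {zv ⟨1, by omega⟩} := by
              intro a ha
              rcases a with (b | b) | (j | u)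
              · exact mem_union_left _ (mem_union_left _ (mem_Xall b))
              · rcases Nat.eq_zero_or_pos (b:ℕ) with hb | hb
                · refine mem_union_left _ (mem_union_right _ ?_)
                  have : b = ⟨0, by omega⟩ := Fin.ext (show (b:ℕ) = 0 by omega)
                  rw [this]; simp [zv, yv]
                · exact absurd ha (hyp b hb)
              · refine mem_union_right _ ?_
                have hj1 : (j:ℕ) ≤ 1 := by by_contra hje; exact hzp j (by omega) ha
                have hj0 : (j:ℕ) ≠ 0 := by
                  intro hje
                  have : j = ⟨0, by omega⟩ := Fin.ext (show (j:ℕ) = 0 by omega)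
                  exact hz0 (this ▸ ha)
                have : j = ⟨1, by omega⟩ := Fin.ext (show (j:ℕ) = 1 by omega)
                rw [this] at ha ⊢; simp [zv, yv]
              · cases u; exact absurd ha hw
            have h1 := card_union3_le (Xall k) ({yv ⟨0, by omega⟩} : Finset (Vk k))
              ({zv ⟨1, by omega⟩} : Finset (Vk k))
            have h2 := card_le_card hsub
            have h3 := Xall_card (k := k)
            have h4 : ({yv ⟨0, by omega⟩} : Finset (Vk k)).card = 1 := card_singleton _
            have h5 : ({zv ⟨1, by omega⟩} : Finset (Vk k)).card = 1 := card_singleton _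
            omega
          · have hsub : S ⊆ Xall k ∪ Yall k := by
              intro a ha
              rcases a with (b | b) | (j | u)
              · exact mem_union_left _ (mem_Xall b)
              · exact mem_union_right _ (mem_Yall b)
              · exfalso
                have hj1 : (j:ℕ) ≤ 1 := by by_contra hje; exact hzp j (by omega) ha
                have : j = ⟨0, by omega⟩ ∨ j = ⟨1, by omega⟩ := by
                  rcases (by omega : (j:ℕ) = 0 ∨ (j:ℕ) = 1) with h | h
                  exacts [Or.inl (Fin.ext h), Or.inr (Fin.ext h)]
                rcases this with h | h <;> rw [h] at ha
                · exact hz0 ha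
                · exact hz1 ha
              · cases u; exact absurd ha hw
            have h1 := card_union_le (Xall k) (Yall k)
            have h2 := card_le_card hsub
            have h3 := Xall_card (k := k); have h4 := Yall_card (k := k)
            omega
    · -- no x in S
      push_neg at hx
      by_cases hy0z0 : yv ⟨0, by omega⟩ ∈ S ∧ zv ⟨0, by omega⟩ ∈ S
      · have hzz : ∀ j : Fin (k+1), (j:ℕ) ≠ 0 → zv j ∉ S := fun j hj hjS =>
          F3 hk hS (i := ⟨0, by omega⟩) (j' := ⟨0, by omega⟩)
            (Or.inr ⟨rfl, rfl⟩) (by simp only [Fin.val_mk]; omega) hy0z0.1 hy0z0.2 hjS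
        have hsub : S ⊆ Yall k ∪ {zv ⟨0, by omega⟩} := by
          intro a ha
          rcases a with (b | b) | (j | u)
          · exact absurd ha (hx b)
          · exact mem_union_left _ (mem_Yall b)
          · refine mem_union_right _ ?_
            have : (j:ℕ) = 0 := by by_contra hje; exact hzz j hje ha
            have : j = ⟨0, by omega⟩ := Fin.ext (show (j:ℕ) = 0 by omega)
            rw [this] at ha ⊢; simp [zv, yv]
          · cases u; exact absurd ha hw
        have h1 := card_union_le (Yall k) ({zv ⟨0, by omega⟩} : Finset (Vk k))
        have h2 := card_le_card hsub
        have h3 := Yall_card (k := k)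
        have h4 : ({zv ⟨0, by omega⟩} : Finset (Vk k)).card = 1 := card_singleton _
        omega
      · by_cases hyz1 : (∃ i : Fin k, 1 ≤ (i:ℕ) ∧ yv i ∈ S) ∧ zv ⟨1, by omega⟩ ∈ S
        · obtain ⟨⟨i1, hi1, hi1S⟩, hz1S⟩ := hyz1
          have hzz : ∀ j : Fin (k+1), (j:ℕ) ≠ 1 → zv j ∉ S := fun j hj hjS =>
            F3 hk hS (i := i1) (j' := ⟨1, by omega⟩)
              (Or.inl ⟨rfl, hi1⟩) (by omega) hi1S hz1S hjS
          have hsub : S ⊆ Yall k ∪ {zv ⟨1, by omega⟩} := by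
            intro a ha
            rcases a with (b | b) | (j | u)
            · exact absurd ha (hx b)
            · exact mem_union_left _ (mem_Yall b)
            · refine mem_union_right _ ?_
              have : (j:ℕ) = 1 := by by_contra hje; exact hzz j hje ha
              have : j = ⟨1, by omega⟩ := Fin.ext (show (j:ℕ) = 1 by omega)
              rw [this] at ha ⊢; simp [zv, yv]
            · cases u; exact absurd ha hw
          have h1 := card_union_le (Yall k) ({zv ⟨1, by omega⟩} : Finset (Vk k))
          have h2 := card_le_card hsub
          have h3 := Yall_card (k := k)
          have h4 : ({zv ⟨1, by omega⟩} : Finset (Vk k)).card = 1 := card_singleton _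
          omega
        · -- remaining: bound by Yall ∪ {z0,z1} ∪ Zplus minus constraints; case on z0, z1
          by_cases hz0 : zv ⟨0, by omega⟩ ∈ S
          · have hy0 : yv ⟨0, by omega⟩ ∉ S := fun h => hy0z0 ⟨h, hz0⟩
            by_cases hz1 : zv ⟨1, by omega⟩ ∈ S
            · have hyp : ∀ i : Fin k, 1 ≤ (i:ℕ) → yv i ∉ S := fun i hi hy =>
                hyz1 ⟨⟨i, hi, hy⟩, hz1⟩
              have hsub : S ⊆ Zall k := by
                intro a ha
                rcases a with (b | b) | (j | u)
                · exact absurd ha (hx b)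
                · exfalso
                  rcases Nat.eq_zero_or_pos (b:ℕ) with hb | hb
                  · have : b = ⟨0, by omega⟩ := Fin.ext (show (b:ℕ) = 0 by omega)
                    exact hy0 (this ▸ ha)
                  · exact hyp b hb ha
                · exact mem_Zall j
                · cases u; exact absurd ha hw
              have h2 := card_le_card hsub
              have h3 := Zall_card (k := k)
              omega
            · have hsub : S ⊆ Yplus k ∪ {zv ⟨0, by omega⟩} ∪ Zplus k := by
                intro a ha
                rcases a with (b | b) | (j | u)
                · exact absurd ha (hx b)
                · rcases Nat.eq_zero_or_pos (b:ℕ) with hb | hb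
                  · exfalso
                    have : b = ⟨0, by omega⟩ := Fin.ext (show (b:ℕ) = 0 by omega)
                    exact hy0 (this ▸ ha)
                  · exact mem_union_left _ (mem_union_left _ (mem_Yplus hb))
                · rcases Nat.lt_or_ge (j:ℕ) 2 with hb | hb
                  · have hj1 : (j:ℕ) ≠ 1 := by
                      intro hje
                      have : j = ⟨1, by omega⟩ := Fin.ext (show (j:ℕ) = 1 by omega)
                      exact hz1 (this ▸ ha)
                    have : j = ⟨0, by omega⟩ := Fin.ext (show (j:ℕ) = 0 by omega)
                    rw [this]
                    exact mem_union_left _ (mem_union_right _ (by simp [zv, yv]))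
                  · exact mem_union_right _ (mem_Zplus hb)
                · cases u; exact absurd ha hw
              have h1 := card_union3_le (Yplus k) ({zv ⟨0, by omega⟩} : Finset (Vk k)) (Zplus k)
              have h2 := card_le_card hsub
              have h3 := Yplus_card (k := k); have h4 := Zplus_card (k := k)
              have h5 : ({zv ⟨0, by omega⟩} : Finset (Vk k)).card = 1 := card_singleton _
              omega
          · by_cases hz1 : zv ⟨1, by omega⟩ ∈ S
            · have hyp : ∀ i : Fin k, 1 ≤ (i:ℕ) → yv i ∉ S := fun i hi hy =>
                hyz1 ⟨⟨i, hi, hy⟩, hz1⟩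
              have hsub : S ⊆ {yv ⟨0, by omega⟩} ∪ {zv ⟨1, by omega⟩} ∪ Zplus k := by
                intro a ha
                rcases a with (b | b) | (j | u)
                · exact absurd ha (hx b)
                · rcases Nat.eq_zero_or_pos (b:ℕ) with hb | hb
                  · have : b = ⟨0, by omega⟩ := Fin.ext (show (b:ℕ) = 0 by omega)
                    rw [this]
                    exact mem_union_left _ (mem_union_left _ (by simp [zv, yv]))
                  · exact absurd ha (hyp b hb)
                · rcases Nat.lt_or_ge (j:ℕ) 2 with hb | hb
                  · have hj0 : (j:ℕ) ≠ 0 := by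
                      intro hje
                      have : j = ⟨0, by omega⟩ := Fin.ext (show (j:ℕ) = 0 by omega)
                      exact hz0 (this ▸ ha)
                    have : j = ⟨1, by omega⟩ := Fin.ext (show (j:ℕ) = 1 by omega)
                    rw [this]
                    exact mem_union_left _ (mem_union_right _ (by simp [zv, yv]))
                  · exact mem_union_right _ (mem_Zplus hb)
                · cases u; exact absurd ha hw
              have h1 := card_union3_le ({yv ⟨0, by omega⟩} : Finset (Vk k))
                ({zv ⟨1, by omega⟩} : Finset (Vk k)) (Zplus k)
              have h2 := card_le_card hsub
              have h3 := Zplus_card (k := k)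
              have h4 : ({yv ⟨0, by omega⟩} : Finset (Vk k)).card = 1 := card_singleton _
              have h5 : ({zv ⟨1, by omega⟩} : Finset (Vk k)).card = 1 := card_singleton _
              omega
            · have hsub : S ⊆ Yall k ∪ Zplus k := by
                intro a ha
                rcases a with (b | b) | (j | u)
                · exact absurd ha (hx b)
                · exact mem_union_left _ (mem_Yall b)
                · rcases Nat.lt_or_ge (j:ℕ) 2 with hb | hb
                  · exfalso
                    have : j = ⟨0, by omega⟩ ∨ j = ⟨1, by omega⟩ := by
                      rcases (by omega : (j:ℕ) = 0 ∨ (j:ℕ) = 1) with h | h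
                      exacts [Or.inl (Fin.ext h), Or.inr (Fin.ext h)]
                    rcases this with h | h <;> rw [h] at ha
                    · exact hz0 ha
                    · exact hz1 ha
                  · exact mem_union_right _ (mem_Zplus hb)
                · cases u; exact absurd ha hw
              have h1 := card_union_le (Yall k) (Zplus k)
              have h2 := card_le_card hsub
              have h3 := Yall_card (k := k); have h4 := Zplus_card (k := k)
              omega
lemma gk_lower (hk : 2 ≤ k) :
    ∃ S : Finset (Vk k), IsGPSet (Gkgraph k) ↑S ∧ S.card = 2 * k := by
  classical
  refine ⟨(Finset.univ : Finset (Fin k ⊕ Fin k)).image inl, ?_, ?_⟩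
  · apply isGPSet_of_dist_lt
    intro u v m hu hv hm huv hum hvm
    simp only [coe_image, Set.mem_image, mem_coe, mem_univ, Finset.coe_univ,
      Set.image_univ, Set.mem_range] at hu hv hm
    obtain ⟨a, rfl⟩ := hu
    obtain ⟨b, rfl⟩ := hv
    obtain ⟨c, rfl⟩ := hm
    rw [dist_inl_inl (by simpa using huv), dist_inl_inl (by simpa using hum),
      dist_inl_inl (fun h => hvm (by simp [h.symm]))]
    omega
  · rw [card_image_of_injective _ Sum.inl_injective]
    simp
    omega

lemma gk_gpNum (hk : 2 ≤ k) : gpNum (Gkgraph k) = 2 * k := by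
  rw [gpNum]
  exact gpNum_eq' _ _ (fun S hS => gk_card_le hk S hS) (gk_lower hk)
section Gd
variable (hk : 2 ≤ k)

def zb : Vk k := zv ⟨1, Nat.lt_succ_of_le (Nat.le_of_succ_le hk)⟩

@[simp] lemma delVert_adj {V : Type*} (G : SimpleGraph V) (x : V) (a b : {y : V // y ≠ x}) :
    (delVert G x).Adj a b ↔ G.Adj a.1 b.1 := Iff.rfl

def Gd (hk : 2 ≤ k) : SimpleGraph {y : Vk k // y ≠ zb hk} := delVert (Gkgraph k) (zb hk)

lemma inl_ne_zb (a : Fin k ⊕ Fin k) : (inl a : Vk k) ≠ zb hk := by simp [zb, zv]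
lemma wv_ne_zb : (wv : Vk k) ≠ zb hk := by simp [zb, zv, wv]
lemma zv_ne_zb {j : Fin (k+1)} (hj : (j:ℕ) ≠ 1) : (zv j : Vk k) ≠ zb hk := by
  simp only [zb, zv, ne_eq, inr.injEq, inl.injEq]
  intro h
  exact hj (by rw [h])

def wd : {y : Vk k // y ≠ zb hk} := ⟨wv, wv_ne_zb hk⟩

/-- distance between two inl vertices -/
lemma dd_inl_inl {a b : Fin k ⊕ Fin k} (h : a ≠ b) (pa : (inl a : Vk k) ≠ zb hk)
    (pb : (inl b : Vk k) ≠ zb hk) :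
    (Gd hk).dist ⟨inl a, pa⟩ ⟨inl b, pb⟩ = 2 := by
  have h1 : (Gd hk).Adj ⟨inl a, pa⟩ (wd hk) := (adj_w_inl a).symm
  have h2 : (Gd hk).Adj (wd hk) ⟨inl b, pb⟩ := adj_w_inl b
  have hub := dist_le_two h1 h2
  have hlb := two_le_dist (G := Gd hk) (u := ⟨inl a, pa⟩) (v := ⟨inl b, pb⟩)
    (fun hh => h (by simpa using congrArg Subtype.val hh))
    (fun hadj => not_adj_inl_inl a b hadj) (reach_two h1 h2)
  omega

lemma dd_w_inl (a : Fin k ⊕ Fin k) (pa : (inl a : Vk k) ≠ zb hk) :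
    (Gd hk).dist (wd hk) ⟨inl a, pa⟩ = 1 :=
  dist_eq_one_iff_adj.mpr (adj_w_inl a)

lemma dd_z_z {j j' : Fin (k+1)} (h : j ≠ j') (pj : (zv j : Vk k) ≠ zb hk)
    (pj' : (zv j' : Vk k) ≠ zb hk) :
    (Gd hk).dist ⟨zv j, pj⟩ ⟨zv j', pj'⟩ = 1 :=
  dist_eq_one_iff_adj.mpr (adj_z_z h)

lemma dd_y0_z {j : Fin (k+1)} (hj : (j:ℕ) ≠ 1) (p0 : (yv ⟨0, by omega⟩ : Vk k) ≠ zb hk)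
    (pj : (zv j : Vk k) ≠ zb hk) :
    (Gd hk).dist ⟨yv ⟨0, by omega⟩, p0⟩ ⟨zv j, pj⟩ = if (j:ℕ) = 0 then 1 else 2 := by
  split_ifs with h0
  · exact dist_eq_one_iff_adj.mpr
      ((adj_z_y (i := ⟨0, by omega⟩) (Or.inr ⟨h0, rfl⟩)).symm)
  · have h1 : (Gd hk).Adj ⟨yv ⟨0, by omega⟩, p0⟩ ⟨zv ⟨0, by omega⟩, zv_ne_zb hk (by simp)⟩ :=
      (adj_z_y (i := ⟨0, by omega⟩) (Or.inr ⟨rfl, rfl⟩)).symm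
    have h2 : (Gd hk).Adj ⟨zv ⟨0, by omega⟩, zv_ne_zb hk (by simp)⟩ ⟨zv j, pj⟩ :=
      adj_z_z (fun hh => h0 (by rw [← hh]))
    have hub := dist_le_two h1 h2
    have hlb := two_le_dist (G := Gd hk) (u := ⟨yv ⟨0, by omega⟩, p0⟩) (v := ⟨zv j, pj⟩)
      (by simp [yv, zv, Subtype.ext_iff])
      (fun hadj => not_adj_y_z (i := ⟨0, by omega⟩) (j := j)
        (by simp only [Fin.val_mk]; omega) hadj) (reach_two h1 h2)
    omega

/-- potential function from w in G' -/
def fd : {y : Vk k // y ≠ zb hk} → ℕ := fun a =>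
  match a.1 with
  | inl _ => 1
  | inr (inl j) => if (j:ℕ) = 0 then 2 else 3
  | inr (inr _) => 0

lemma fd_lip : ∀ a b : {y : Vk k // y ≠ zb hk}, (Gd hk).Adj a b → fd hk b ≤ fd hk a + 1 := by
  rintro ⟨va, pa⟩ ⟨vb, pb⟩ hab
  simp only [Gd, delVert_adj] at hab
  rcases vb with b | (j | u)
  · rcases va with a | (j' | u) <;> simp [fd] <;> split_ifs <;> omega
  · rcases va with (i | i) | (j' | u)
    · exact absurd hab (not_adj_x_z i j)
    · have hcond := adj_y_z_elim (i := i) (j := j) hab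
      have hj1 : (j:ℕ) ≠ 1 := fun h1 => pb (by
        simp only [zb, zv]
        congr 1
        congr 1
        exact Fin.ext (by simp [h1]))
      simp only [fd]
      split_ifs <;> omega
    · simp only [fd]; split_ifs <;> omega
    · cases u; exact absurd hab (not_adj_w_z j)
  · rcases va with a | (j' | u') <;> simp [fd]

lemma dd_w_z {j : Fin (k+1)} (hj : (j:ℕ) ≠ 1) (pj : (zv j : Vk k) ≠ zb hk) :
    (Gd hk).dist (wd hk) ⟨zv j, pj⟩ = if (j:ℕ) = 0 then 2 else 3 := by
  have p0 : (zv ⟨0, by omega⟩ : Vk k) ≠ zb hk := zv_ne_zb hk (by simp)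
  have py : (yv ⟨0, by omega⟩ : Vk k) ≠ zb hk := inl_ne_zb hk _
  have h1 : (Gd hk).Adj (wd hk) ⟨yv ⟨0, by omega⟩, py⟩ := adj_w_inl _
  have h2 : (Gd hk).Adj ⟨yv ⟨0, by omega⟩, py⟩ ⟨zv ⟨0, by omega⟩, p0⟩ :=
    (adj_z_y (i := ⟨0, by omega⟩) (Or.inr ⟨rfl, rfl⟩)).symm
  have hub : (Gd hk).dist (wd hk) ⟨zv j, pj⟩ ≤ if (j:ℕ) = 0 then 2 else 3 := by
    split_ifs with h0
    · have h2' : (Gd hk).Adj ⟨yv ⟨0, by omega⟩, py⟩ ⟨zv j, pj⟩ :=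
        (adj_z_y (i := ⟨0, by omega⟩) (Or.inr ⟨h0, rfl⟩)).symm
      exact dist_le_two h1 h2'
    · exact dist_le_three h1 h2 (adj_z_z (fun hh => h0 (by rw [← hh])))
  have hr : (Gd hk).Reachable (wd hk) ⟨zv j, pj⟩ := by
    rcases eq_or_ne ((j:ℕ)) 0 with h0 | h0
    · exact reach_two h1 ((adj_z_y (i := ⟨0, by omega⟩) (Or.inr ⟨h0, rfl⟩)).symm)
    · exact reach_three h1 h2 (adj_z_z (fun hh => h0 (by rw [← hh])))
  have hlb := dist_ge_potential (fd hk) (fd_lip hk) hr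
  have e1 : fd hk (wd hk) = 0 := rfl
  have e2 : fd hk ⟨zv j, pj⟩ = if (j:ℕ) = 0 then 2 else 3 := rfl
  rw [e1, e2] at hlb
  split_ifs at hub hlb ⊢ <;> omega

lemma pend_d {a : Fin k ⊕ Fin k} (ha : ∀ i0 : Fin k, a = inr i0 → 1 ≤ (i0:ℕ))
    (pa : (inl a : Vk k) ≠ zb hk) :
    ∀ b : {y : Vk k // y ≠ zb hk}, (Gd hk).Adj ⟨inl a, pa⟩ b → b = wd hk := by
  rintro ⟨(b | (j | u)), pb⟩ hab
  · exact absurd hab (not_adj_inl_inl _ _)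
  · exfalso
    rcases a with i | i
    · exact not_adj_x_z i j hab
    · have hcond := adj_y_z_elim (i := i) (j := j) hab
      have hi := ha i rfl
      have hj1 : (j:ℕ) ≠ 1 := fun h1 => pb (by
        simp only [zb, zv]
        congr 1
        congr 1
        exact Fin.ext (by simp [h1]))
      omega
  · cases u; rfl

lemma dd_pend_z {a : Fin k ⊕ Fin k} (ha : ∀ i0 : Fin k, a = inr i0 → 1 ≤ (i0:ℕ))
    (pa : (inl a : Vk k) ≠ zb hk) {j : Fin (k+1)} (hj : (j:ℕ) ≠ 1)
    (pj : (zv j : Vk k) ≠ zb hk) :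
    (Gd hk).dist ⟨inl a, pa⟩ ⟨zv j, pj⟩ = if (j:ℕ) = 0 then 3 else 4 := by
  have hwz := dd_w_z hk hj pj
  have hrwz : (Gd hk).Reachable (wd hk) ⟨zv j, pj⟩ := by
    apply Reachable.of_dist_ne_zero
    rw [hwz]
    split_ifs <;> omega
  have h1 : (Gd hk).Adj ⟨inl a, pa⟩ (wd hk) := (adj_w_inl a).symm
  have hub := dist_cons_le h1 hrwz
  have hr : (Gd hk).Reachable ⟨inl a, pa⟩ ⟨zv j, pj⟩ := (Walk.cons h1 Walk.nil).reachable.trans hrwz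
  have hlb := dist_pendant (pend_d hk ha pa) (fun hh => by simpa [zv] using congrArg Subtype.val hh) hr
  rw [hwz] at hub hlb
  split_ifs at hub hlb ⊢ <;> omega

end Gd
section GdViol
variable (hk : 2 ≤ k) {S : Finset {y : Vk k // y ≠ zb hk}}
  (hS : IsGPSet (Gd hk) ↑S)
include hk hS

lemma FD1 (hw : wd hk ∈ S) {a b : Fin k ⊕ Fin k} (hab : a ≠ b)
    {pa : (inl a : Vk k) ≠ zb hk} {pb : (inl b : Vk k) ≠ zb hk}
    (ha : ⟨inl a, pa⟩ ∈ S) (hb : ⟨inl b, pb⟩ ∈ S) : False := by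
  have e1 : (Gd hk).dist ⟨inl a, pa⟩ (wd hk) = 1 := by
    rw [SimpleGraph.dist_comm]; exact dd_w_inl hk a pa
  refine hS.not_between (u := ⟨inl a, pa⟩) (m := wd hk) (v := ⟨inl b, pb⟩)
    (Finset.mem_coe.mpr ha) (Finset.mem_coe.mpr hb) (Finset.mem_coe.mpr hw)
    (by simp [hab, Subtype.ext_iff]) (by simp [wd, wv, Subtype.ext_iff])
    (by simp [wd, wv, Subtype.ext_iff]) ?_ ?_ ?_
  · rw [e1]; omega
  · rw [dd_w_inl hk b pb]; omega
  · rw [e1, dd_w_inl hk b pb, dd_inl_inl hk hab pa pb]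

lemma FD2 (hw : wd hk ∈ S) {j : Fin (k+1)} (hj : (j:ℕ) ≠ 1)
    {p0 : (yv ⟨0, by omega⟩ : Vk k) ≠ zb hk} {pj : (zv j : Vk k) ≠ zb hk}
    (hy : ⟨yv ⟨0, by omega⟩, p0⟩ ∈ S) (hz : ⟨zv j, pj⟩ ∈ S) : False := by
  refine hS.not_between (u := wd hk) (m := ⟨yv ⟨0, by omega⟩, p0⟩) (v := ⟨zv j, pj⟩)
    (Finset.mem_coe.mpr hw) (Finset.mem_coe.mpr hz) (Finset.mem_coe.mpr hy)
    (by simp [wd, wv, zv, Subtype.ext_iff]) (by simp [wd, wv, yv, Subtype.ext_iff])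
    (by simp [yv, zv, Subtype.ext_iff]) ?_ ?_ ?_
  · have e0 : (Gd hk).dist (wd hk) ⟨yv ⟨0, by omega⟩, p0⟩ = 1 :=
      dd_w_inl hk (inr ⟨0, by omega⟩) p0
    rw [e0]; omega
  · rw [dd_y0_z hk hj p0 pj]; split_ifs <;> omega
  · have e0 : (Gd hk).dist (wd hk) ⟨yv ⟨0, by omega⟩, p0⟩ = 1 :=
      dd_w_inl hk (inr ⟨0, by omega⟩) p0
    rw [e0, dd_y0_z hk hj p0 pj, dd_w_z hk hj pj]
    split_ifs <;> omega

lemma FD3 {a : Fin k ⊕ Fin k} (ha : ∀ i0 : Fin k, a = inr i0 → 1 ≤ (i0:ℕ))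
    {pa : (inl a : Vk k) ≠ zb hk} {j : Fin (k+1)} (hj : (j:ℕ) ≠ 1)
    {p0 : (yv ⟨0, by omega⟩ : Vk k) ≠ zb hk} {pj : (zv j : Vk k) ≠ zb hk}
    (haS : ⟨inl a, pa⟩ ∈ S) (hy : ⟨yv ⟨0, by omega⟩, p0⟩ ∈ S)
    (hz : ⟨zv j, pj⟩ ∈ S) : False := by
  have hay : a ≠ inr ⟨0, by omega⟩ := by
    intro hh
    have := ha ⟨0, by omega⟩ hh
    simp at this
  have e1 : (Gd hk).dist ⟨inl a, pa⟩ ⟨yv ⟨0, by omega⟩, p0⟩ = 2 :=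
    dd_inl_inl hk hay pa p0
  refine hS.not_between (u := ⟨inl a, pa⟩) (m := ⟨yv ⟨0, by omega⟩, p0⟩) (v := ⟨zv j, pj⟩)
    (Finset.mem_coe.mpr haS) (Finset.mem_coe.mpr hz) (Finset.mem_coe.mpr hy)
    (by simp [zv, Subtype.ext_iff]) (by simp [yv, Subtype.ext_iff, hay])
    (by simp [yv, zv, Subtype.ext_iff]) ?_ ?_ ?_
  · rw [e1]; omega
  · rw [dd_y0_z hk hj p0 pj]; split_ifs <;> omega
  · rw [e1, dd_y0_z hk hj p0 pj, dd_pend_z hk ha pa hj pj]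
    split_ifs <;> omega

lemma FD4 {a : Fin k ⊕ Fin k} (ha : ∀ i0 : Fin k, a = inr i0 → 1 ≤ (i0:ℕ))
    {pa : (inl a : Vk k) ≠ zb hk} {j : Fin (k+1)} (hj : 2 ≤ (j:ℕ))
    {p0 : (zv ⟨0, by omega⟩ : Vk k) ≠ zb hk} {pj : (zv j : Vk k) ≠ zb hk}
    (haS : ⟨inl a, pa⟩ ∈ S) (hz0 : ⟨zv ⟨0, by omega⟩, p0⟩ ∈ S)
    (hz : ⟨zv j, pj⟩ ∈ S) : False := by
  have hne : (⟨0, by omega⟩ : Fin (k+1)) ≠ j := by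
    rw [Fin.ne_iff_vne]; simp; omega
  refine hS.not_between (u := ⟨inl a, pa⟩) (m := ⟨zv ⟨0, by omega⟩, p0⟩) (v := ⟨zv j, pj⟩)
    (Finset.mem_coe.mpr haS) (Finset.mem_coe.mpr hz) (Finset.mem_coe.mpr hz0)
    (by simp [zv, Subtype.ext_iff]) (by simp [zv, Subtype.ext_iff])
    (by intro hh; apply hne; exact (by simpa [zv] using congrArg Subtype.val hh : _ = _).symm) ?_ ?_ ?_
  · have e0 : (Gd hk).dist ⟨inl a, pa⟩ ⟨zv ⟨0, by omega⟩, p0⟩ = 3 := by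
      rw [dd_pend_z hk ha pa (by simp) p0]; simp
    rw [e0]; omega
  · rw [dd_z_z hk hne p0 pj]; omega
  · have e0 : (Gd hk).dist ⟨inl a, pa⟩ ⟨zv ⟨0, by omega⟩, p0⟩ = 3 := by
      rw [dd_pend_z hk ha pa (by simp) p0]; simp
    rw [e0, dd_z_z hk hne p0 pj, dd_pend_z hk ha pa (by omega) pj]
    split_ifs <;> omega

end GdViol
lemma mem_cast {hk : 2 ≤ k} {S : Finset {y : Vk k // y ≠ zb hk}}
    {a : {y : Vk k // y ≠ zb hk}} {v : Vk k} (ha : a ∈ S) (h : a.1 = v)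
    (pv : v ≠ zb hk) : (⟨v, pv⟩ : {y : Vk k // y ≠ zb hk}) ∈ S := by
  have h2 : a = ⟨v, pv⟩ := Subtype.ext h
  exact h2 ▸ ha

lemma zb_idx (hk : 2 ≤ k) {j : Fin (k+1)} (pfa : (zv j : Vk k) ≠ zb hk) : (j:ℕ) ≠ 1 :=
  fun h1 => pfa (by
    simp only [zb, zv]
    congr 1
    congr 1
    exact Fin.ext (by simp [h1]))

lemma gd_card_le (hk : 2 ≤ k) (S : Finset {y : Vk k // y ≠ zb hk})
    (hS : IsGPSet (Gd hk) ↑S) : S.card ≤ 3 * k - 2 := by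
  classical
  have hzbZ : zb hk ∈ Zall k := mem_Zall _
  by_cases hw : wd hk ∈ S
  · set T : Finset {y : Vk k // y ≠ zb hk} := S.filter (fun a => a.1.isLeft) with hT
    have hT1 : T.card ≤ 1 := by
      apply card_le_one.mpr
      intro a ha b hb
      rcases mem_filter.mp ha with ⟨haS, ha'⟩
      rcases mem_filter.mp hb with ⟨hbS, hb'⟩
      rcases Sum.isLeft_iff.mp ha' with ⟨a', hav⟩
      rcases Sum.isLeft_iff.mp hb' with ⟨b', hbv⟩
      by_contra hne
      have ha2 : a = ⟨inl a', hav ▸ a.2⟩ := Subtype.ext hav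
      have hb2 : b = ⟨inl b', hbv ▸ b.2⟩ := Subtype.ext hbv
      have hne' : a' ≠ b' := by
        intro h
        exact hne (by rw [ha2, hb2]; exact Subtype.ext (by simp [h]))
      exact FD1 hk hS hw hne' (ha2 ▸ haS) (hb2 ▸ hbS)
    have hsub : S ⊆ T ∪ ({wv} ∪ Zall k).subtype (fun y => y ≠ zb hk) := by
      intro a ha
      rcases ha2 : a.1 with (b | b) | (j | u)
      · exact mem_union_left _ (mem_filter.mpr ⟨ha, by rw [ha2]; rfl⟩)
      · exact mem_union_left _ (mem_filter.mpr ⟨ha, by rw [ha2]; rfl⟩)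
      · refine mem_union_right _ (Finset.mem_subtype.mpr ?_)
        rw [ha2]
        exact mem_union_right _ (mem_Zall j)
      · refine mem_union_right _ (Finset.mem_subtype.mpr ?_)
        rw [ha2]
        cases u
        exact mem_union_left _ (by simp [wv])
    have hc1 : (({wv} ∪ Zall k).subtype (fun y => y ≠ zb hk)).card
        ≤ ({wv} ∪ Zall k).card - 1 := by
      rw [Finset.card_subtype, filter_ne',
        card_erase_of_mem (mem_union_right _ hzbZ)]
    have hc2 : ({wv} ∪ (Zall k)).card ≤ 1 + (k+1) :=
      le_trans (card_union_le _ _) (by simp only [card_singleton]; exact Nat.add_le_add_left Zall_card 1)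
    have h2 := card_le_card hsub
    have h3 := card_union_le T (({wv} ∪ Zall k).subtype (fun y => y ≠ zb hk))
    omega
  · by_cases hy0 : (⟨yv ⟨0, by omega⟩, inl_ne_zb hk _⟩ : {y : Vk k // y ≠ zb hk}) ∈ S
    · by_cases hzS : ∃ a ∈ S, ∃ j : Fin (k+1), a.1 = zv j
      · by_cases hpend : ∃ a ∈ S, ∃ b : Fin k ⊕ Fin k, a.1 = inl b ∧
            ∀ i0 : Fin k, b = inr i0 → 1 ≤ (i0:ℕ)
        · exfalso
          obtain ⟨az, hazS, j, haz⟩ := hzS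
          obtain ⟨ap, hapS, b, hap, hbp⟩ := hpend
          have pj : (zv j : Vk k) ≠ zb hk := haz ▸ az.2
          have pb : (inl b : Vk k) ≠ zb hk := hap ▸ ap.2
          exact FD3 hk hS hbp (zb_idx hk pj) (mem_cast hapS hap pb) hy0
            (mem_cast hazS haz pj)
        · -- no pendant inl vertex: S ⊆ {y0} ∪ Z
          have hsub : S ⊆ ({yv ⟨0, by omega⟩} ∪ Zall k).subtype (fun y => y ≠ zb hk) := by
            intro a ha
            refine Finset.mem_subtype.mpr ?_
            rcases ha2 : a.1 with (b | b) | (j | u)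
            · exact absurd ⟨a, ha, inl b, ha2, fun i0 h => by simp at h⟩ hpend
            · rcases Nat.eq_zero_or_pos (b:ℕ) with hb | hb
              · have : b = ⟨0, by omega⟩ := Fin.ext (show (b:ℕ) = 0 by omega)
                rw [this]
                exact mem_union_left _ (by simp [yv])
              · exact absurd ⟨a, ha, inr b, ha2, fun i0 h => by
                  rw [inr.injEq] at h; omega⟩ hpend
            · exact mem_union_right _ (mem_Zall j)
            · exfalso
              cases u
              exact hw (mem_cast ha ha2 (wv_ne_zb hk))
          have hc1 : (({yv ⟨0, by omega⟩} ∪ Zall k).subtype (fun y => y ≠ zb hk)).card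
              ≤ ({yv ⟨0, by omega⟩} ∪ Zall k).card - 1 := by
            rw [Finset.card_subtype, filter_ne',
              card_erase_of_mem (mem_union_right _ hzbZ)]
          have hc2 : ({yv ⟨0, by omega⟩} ∪ (Zall k)).card ≤ 1 + (k+1) :=
            le_trans (card_union_le _ _) (by
              simp only [card_singleton]
              exact Nat.add_le_add_left Zall_card 1)
          have h2 := card_le_card hsub
          omega
      · -- no z vertex in S
        have hsub : S ⊆ (Xall k ∪ Yall k).subtype (fun y => y ≠ zb hk) := by
          intro a ha
          refine Finset.mem_subtype.mpr ?_
          rcases ha2 : a.1 with (b | b) | (j | u)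
          · exact mem_union_left _ (mem_Xall b)
          · exact mem_union_right _ (mem_Yall b)
          · exact absurd ⟨a, ha, j, ha2⟩ hzS
          · exfalso
            cases u
            exact hw (mem_cast ha ha2 (wv_ne_zb hk))
        have h2 := card_le_card hsub
        have hc1 : ((Xall k ∪ Yall k).subtype (fun y => y ≠ zb hk)).card
            ≤ (Xall k ∪ Yall k).card := by
          rw [Finset.card_subtype]
          exact card_le_card (filter_subset _ _)
        have hc2 := card_union_le (Xall k) (Yall k)
        have hc3 := Xall_card (k := k); have hc4 := Yall_card (k := k)
        omega
    · -- y0 ∉ S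
      by_cases hz0 : (⟨zv ⟨0, by omega⟩, zv_ne_zb hk (by simp)⟩ : {y : Vk k // y ≠ zb hk}) ∈ S
      · by_cases hzp : ∃ a ∈ S, ∃ j : Fin (k+1), a.1 = zv j ∧ 2 ≤ (j:ℕ)
        · -- z0 and z+ in S: no pendant inl in S, and y0 ∉ S: S ⊆ Z
          obtain ⟨az, hazS, j, haz, hj2⟩ := hzp
          have hnopend : ∀ (b : Fin k ⊕ Fin k) (pb : (inl b : Vk k) ≠ zb hk),
              (∀ i0 : Fin k, b = inr i0 → 1 ≤ (i0:ℕ)) → (⟨inl b, pb⟩ : {y : Vk k // y ≠ zb hk}) ∉ S :=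
            fun b pb hbp hbS => FD4 hk hS hbp hj2 hbS hz0 (mem_cast hazS haz (haz ▸ az.2))
          have hsub : S ⊆ (Zall k).subtype (fun y => y ≠ zb hk) := by
            intro a ha
            refine Finset.mem_subtype.mpr ?_
            rcases ha2 : a.1 with (b | b) | (j' | u)
            · exact absurd (mem_cast ha ha2 (inl_ne_zb hk _))
                (hnopend (inl b) _ (fun i0 h => by simp at h))
            · rcases Nat.eq_zero_or_pos (b:ℕ) with hb | hb
              · exfalso
                have hb0 : b = ⟨0, by omega⟩ := Fin.ext (show (b:ℕ) = 0 by omega)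
                exact hy0 (mem_cast ha (show a.1 = yv ⟨0, by omega⟩ by
                  rw [ha2, hb0]; rfl) (inl_ne_zb hk _))
              · exact absurd (mem_cast ha ha2 (inl_ne_zb hk _))
                  (hnopend (inr b) _ (fun i0 h => by rw [inr.injEq] at h; omega))
            · exact mem_Zall j'
            · exfalso
              cases u
              exact hw (mem_cast ha ha2 (wv_ne_zb hk))
          have hc1 : ((Zall k).subtype (fun y => y ≠ zb hk)).card ≤ (Zall k).card - 1 := by
            rw [Finset.card_subtype, filter_ne', card_erase_of_mem hzbZ]
          have h2 := card_le_card hsub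
          have hc2 := Zall_card (k := k)
          omega
        · -- z0 in S, no z+: S ⊆ X ∪ Y+ ∪ {z0}
          have hsub : S ⊆ (Xall k ∪ Yplus k ∪ {zv ⟨0, by omega⟩}).subtype
              (fun y => y ≠ zb hk) := by
            intro a ha
            refine Finset.mem_subtype.mpr ?_
            rcases ha2 : a.1 with (b | b) | (j' | u)
            · exact mem_union_left _ (mem_union_left _ (mem_Xall b))
            · rcases Nat.eq_zero_or_pos (b:ℕ) with hb | hb
              · exfalso
                have hb0 : b = ⟨0, by omega⟩ := Fin.ext (show (b:ℕ) = 0 by omega)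
                exact hy0 (mem_cast ha (show a.1 = yv ⟨0, by omega⟩ by
                  rw [ha2, hb0]; rfl) (inl_ne_zb hk _))
              · exact mem_union_left _ (mem_union_right _ (mem_Yplus hb))
            · have hj1 : (j':ℕ) ≠ 1 := zb_idx hk (show (zv j' : Vk k) ≠ zb hk by intro h; exact a.2 (by rw [ha2]; exact h))
              have hj2 : ¬ (2 ≤ (j':ℕ)) := fun h2 => hzp ⟨a, ha, j', ha2, h2⟩
              have : j' = ⟨0, by omega⟩ := Fin.ext (show (j':ℕ) = 0 by omega)
              rw [this]
              exact mem_union_right _ (by simp [zv])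
            · exfalso
              cases u
              exact hw (mem_cast ha ha2 (wv_ne_zb hk))
          have hc1 : ((Xall k ∪ Yplus k ∪ {zv ⟨0, by omega⟩}).subtype
              (fun y => y ≠ zb hk)).card ≤ (Xall k ∪ Yplus k ∪ {zv ⟨0, by omega⟩}).card := by
            rw [Finset.card_subtype]
            exact card_le_card (filter_subset _ _)
          have h2 := card_le_card hsub
          have hc2 := card_union3_le (Xall k) (Yplus k) ({zv ⟨0, by omega⟩} : Finset (Vk k))
          have hc3 := Xall_card (k := k); have hc4 := Yplus_card (k := k)
          have hc5 : ({zv ⟨0, by omega⟩} : Finset (Vk k)).card = 1 := card_singleton _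
          omega
      · -- z0 ∉ S: S ⊆ X ∪ Y+ ∪ Z+
        have hsub : S ⊆ (Xall k ∪ Yplus k ∪ Zplus k).subtype (fun y => y ≠ zb hk) := by
          intro a ha
          refine Finset.mem_subtype.mpr ?_
          rcases ha2 : a.1 with (b | b) | (j' | u)
          · exact mem_union_left _ (mem_union_left _ (mem_Xall b))
          · rcases Nat.eq_zero_or_pos (b:ℕ) with hb | hb
            · exfalso
              have hb0 : b = ⟨0, by omega⟩ := Fin.ext (show (b:ℕ) = 0 by omega)
              exact hy0 (mem_cast ha (show a.1 = yv ⟨0, by omega⟩ by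
                rw [ha2, hb0]; rfl) (inl_ne_zb hk _))
            · exact mem_union_left _ (mem_union_right _ (mem_Yplus hb))
          · have hj1 : (j':ℕ) ≠ 1 := zb_idx hk (show (zv j' : Vk k) ≠ zb hk by intro h; exact a.2 (by rw [ha2]; exact h))
            rcases Nat.lt_or_ge (j':ℕ) 2 with hb | hb
            · exfalso
              have hb0 : j' = ⟨0, by omega⟩ := Fin.ext (show (j':ℕ) = 0 by omega)
              exact hz0 (mem_cast ha (show a.1 = zv ⟨0, by omega⟩ by
                rw [ha2, hb0]; rfl) (zv_ne_zb hk (by simp)))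
            · exact mem_union_right _ (mem_Zplus hb)
          · exfalso
            cases u
            exact hw (mem_cast ha ha2 (wv_ne_zb hk))
        have hc1 : ((Xall k ∪ Yplus k ∪ Zplus k).subtype (fun y => y ≠ zb hk)).card
            ≤ (Xall k ∪ Yplus k ∪ Zplus k).card := by
          rw [Finset.card_subtype]
          exact card_le_card (filter_subset _ _)
        have h2 := card_le_card hsub
        have hc2 := card_union3_le (Xall k) (Yplus k) (Zplus k)
        have hc3 := Xall_card (k := k); have hc4 := Yplus_card (k := k)
        have hc5 := Zplus_card (k := k)
        omega
lemma dd_iz (hk : 2 ≤ k) {b : Fin k ⊕ Fin k} (hb : ∀ i0 : Fin k, b = inr i0 → 1 ≤ (i0:ℕ))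
    (pb : (inl b : Vk k) ≠ zb hk) {j : Fin (k+1)} (hj : 2 ≤ (j:ℕ))
    (pj : (zv j : Vk k) ≠ zb hk) :
    (Gd hk).dist ⟨inl b, pb⟩ ⟨zv j, pj⟩ = 4 := by
  rw [dd_pend_z hk hb pb (by omega) pj, if_neg (by omega)]

lemma dd_zi (hk : 2 ≤ k) {b : Fin k ⊕ Fin k} (hb : ∀ i0 : Fin k, b = inr i0 → 1 ≤ (i0:ℕ))
    (pb : (inl b : Vk k) ≠ zb hk) {j : Fin (k+1)} (hj : 2 ≤ (j:ℕ))
    (pj : (zv j : Vk k) ≠ zb hk) :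
    (Gd hk).dist ⟨zv j, pj⟩ ⟨inl b, pb⟩ = 4 := by
  rw [SimpleGraph.dist_comm]; exact dd_iz hk hb pb hj pj

lemma Xall_card_eq : (Xall k).card = k := by
  rw [Xall, card_image_of_injective _ (fun a b h => by simpa [xv] using h)]
  simp

lemma Yplus_card_eq (hk : 2 ≤ k) : (Yplus k).card = k - 1 := by
  rw [Yplus, card_image_of_injective _ (fun a b h => by
    simp only [yv, inl.injEq, inr.injEq, Fin.mk.injEq] at h
    exact Fin.ext (by omega))]
  simp

lemma Zplus_card_eq (hk : 2 ≤ k) : (Zplus k).card = k - 1 := by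
  rw [Zplus, card_image_of_injective _ (fun a b h => by
    simp only [zv, inr.injEq, inl.injEq, Fin.mk.injEq] at h
    exact Fin.ext (by omega))]
  simp

lemma gd_lower (hk : 2 ≤ k) :
    ∃ S : Finset {y : Vk k // y ≠ zb hk},
      IsGPSet (Gd hk) ↑S ∧ S.card = 3 * k - 2 := by
  classical
  refine ⟨(Xall k ∪ Yplus k ∪ Zplus k).subtype (fun y => y ≠ zb hk), ?_, ?_⟩
  · have hcls : ∀ a ∈ (Xall k ∪ Yplus k ∪ Zplus k).subtype (fun y => y ≠ zb hk),
        (∃ (b : Fin k ⊕ Fin k) (pb : (inl b : Vk k) ≠ zb hk),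
          a = ⟨inl b, pb⟩ ∧ ∀ i0 : Fin k, b = inr i0 → 1 ≤ (i0:ℕ)) ∨
        (∃ (j : Fin (k+1)) (pj : (zv j : Vk k) ≠ zb hk),
          a = ⟨zv j, pj⟩ ∧ 2 ≤ (j:ℕ)) := by
      intro a ha
      have hav := Finset.mem_subtype.mp ha
      rcases mem_union.mp hav with hav' | hav'
      · rcases mem_union.mp hav' with hx | hy
        · obtain ⟨i, _, hi⟩ := mem_image.mp hx
          have pb : (inl (inl i) : Vk k) ≠ zb hk := by
            intro h
            exact a.2 (by rw [← hi]; exact h)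
          exact Or.inl ⟨inl i, pb, Subtype.ext (by first | (rw [← hi]; rfl) | rw [← hi]),
            fun i0 h => by simp at h⟩
        · obtain ⟨i, _, hi⟩ := mem_image.mp hy
          have pb : (inl (inr ⟨(i:ℕ)+1, by have := i.isLt; omega⟩) : Vk k) ≠ zb hk := by
            intro h
            exact a.2 (by rw [← hi]; exact h)
          refine Or.inl ⟨inr ⟨(i:ℕ)+1, by have := i.isLt; omega⟩, pb,
            Subtype.ext (by first | (rw [← hi]; rfl) | rw [← hi]), fun i0 h => ?_⟩
          rw [inr.injEq] at h
          rw [← h]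
          simp
      · obtain ⟨j, _, hj⟩ := mem_image.mp hav'
        have pj : (zv ⟨(j:ℕ)+2, by have := j.isLt; omega⟩ : Vk k) ≠ zb hk := by
          intro h
          exact a.2 (by rw [← hj]; exact h)
        exact Or.inr ⟨⟨(j:ℕ)+2, by have := j.isLt; omega⟩, pj,
          Subtype.ext (by first | (rw [← hj]; rfl) | rw [← hj]), by simp⟩
    apply isGPSet_of_dist_lt
    intro u v m hu hv hm huv hum hvm
    rcases hcls u (Finset.mem_coe.mp hu) with ⟨b1, p1, rfl, hp1⟩ | ⟨j1, q1, rfl, hj1⟩ <;>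
      rcases hcls v (Finset.mem_coe.mp hv) with ⟨b2, p2, rfl, hp2⟩ | ⟨j2, q2, rfl, hj2⟩ <;>
      rcases hcls m (Finset.mem_coe.mp hm) with ⟨b3, p3, rfl, hp3⟩ | ⟨j3, q3, rfl, hj3⟩
    · rw [dd_inl_inl hk (fun h => huv (Subtype.ext (by simp [h]))) p1 p2,
        dd_inl_inl hk (fun h => hum (Subtype.ext (by simp [h]))) p1 p3,
        dd_inl_inl hk (fun h => hvm (Subtype.ext (by simp [h]))) p3 p2]
      omega
    · rw [dd_inl_inl hk (fun h => huv (Subtype.ext (by simp [h]))) p1 p2,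
        dd_iz hk hp1 p1 hj3 q3, dd_zi hk hp2 p2 hj3 q3]
      omega
    · rw [dd_iz hk hp1 p1 hj2 q2,
        dd_inl_inl hk (fun h => hum (Subtype.ext (by simp [h]))) p1 p3,
        dd_iz hk hp3 p3 hj2 q2]
      omega
    · rw [dd_iz hk hp1 p1 hj2 q2, dd_iz hk hp1 p1 hj3 q3,
        dd_z_z hk (fun h => hvm (Subtype.ext (by simp [h]))) q3 q2]
      omega
    · rw [dd_zi hk hp2 p2 hj1 q1, dd_inl_inl hk (fun h => hvm (Subtype.ext (by simp [h]))) p3 p2,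
        dd_zi hk hp3 p3 hj1 q1]
      omega
    · rw [dd_zi hk hp2 p2 hj1 q1, dd_z_z hk (fun h => hum (Subtype.ext (by simp [h]))) q1 q3,
        dd_zi hk hp2 p2 hj3 q3]
      omega
    · rw [dd_z_z hk (fun h => huv (Subtype.ext (by simp [h]))) q1 q2,
        dd_zi hk hp3 p3 hj1 q1, dd_iz hk hp3 p3 hj2 q2]
      omega
    · rw [dd_z_z hk (fun h => huv (Subtype.ext (by simp [h]))) q1 q2,
        dd_z_z hk (fun h => hum (Subtype.ext (by simp [h]))) q1 q3,
        dd_z_z hk (fun h => hvm (Subtype.ext (by simp [h]))) q3 q2]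
      omega
  · have hzb : zb hk ∉ Xall k ∪ Yplus k ∪ Zplus k := by
      intro hmem
      rcases mem_union.mp hmem with hmem' | hmem'
      · rcases mem_union.mp hmem' with hx | hy
        · obtain ⟨i, _, hi⟩ := mem_image.mp hx
          simp [xv, zb, zv] at hi
        · obtain ⟨i, _, hi⟩ := mem_image.mp hy
          simp [yv, zb, zv] at hi
      · obtain ⟨j, _, hj⟩ := mem_image.mp hmem'
        simp only [zv, zb, inr.injEq, inl.injEq, Fin.mk.injEq] at hj
        omega
    have hd1 : Disjoint (Xall k) (Yplus k) := by
      rw [Finset.disjoint_left]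
      intro a hx hy
      obtain ⟨i, _, hi⟩ := mem_image.mp hx
      obtain ⟨i', _, hi'⟩ := mem_image.mp hy
      rw [← hi] at hi'
      simp [xv, yv] at hi'
    have hd2 : Disjoint (Xall k ∪ Yplus k) (Zplus k) := by
      rw [Finset.disjoint_left]
      intro a hx hz
      obtain ⟨j, _, hj⟩ := mem_image.mp hz
      rcases mem_union.mp hx with hx' | hx'
      · obtain ⟨i, _, hi⟩ := mem_image.mp hx'
        rw [← hi] at hj
        simp [xv, zv] at hj
      · obtain ⟨i, _, hi⟩ := mem_image.mp hx'
        rw [← hi] at hj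
        simp [yv, zv] at hj
    rw [Finset.card_subtype, filter_ne', erase_eq_of_notMem hzb,
      card_union_of_disjoint hd2, card_union_of_disjoint hd1,
      Xall_card_eq, Yplus_card_eq hk, Zplus_card_eq hk]
    omega

lemma gd_gpNum (hk : 2 ≤ k) : gpNum (Gd hk) = 3 * k - 2 := by
  rw [gpNum]
  exact gpNum_eq' _ _ (fun S hS => gd_card_le hk S hS) (gd_lower hk)


end

/-- For `k ≥ 2`, `gp(G_k) = 2k` and `gp(G_k - z_2) = 3k - 2`. -/
theorem stmt_5 (k : ℕ) (hk : 2 ≤ k) :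
    gpNum (Gkgraph k) = 2 * k ∧
    gpNum (delVert (Gkgraph k) (Sum.inr (Sum.inl ⟨1, by omega⟩))) = 3 * k - 2 := by
  exact ⟨gk_gpNum hk, gd_gpNum hk⟩
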